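/- Let P_n be the path on n ≥ 1 vertices. Then: (i) if n ≡ 0 (mod 3), then I(P_n, −1) = (−1)^n; (ii) if n ≡ 2 (mod 3), then I(P_n, −1) = (−1)^{n−1}; (iii) if n ≡ 1 (mod 3), then I(P_n, −1) = 0 and the first derivative satisfies I'(P_n, −1) = ((n+2)/3)·(−1)^{n−1}. -/
import Mathlib


open Finset Polynomial

/-- Every subset of a finite type gets a `Fintype` instance (classically). -/
noncomputable instance fintypeOfSet {V : Type*} [Finite V] (s : Set V) : Fintype ↥s :=
  Fintype.ofFinite _

/-- `s` is an independent set of the graph `G`: no two of its vertices are adjacent. -/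
def IsIndepSet {V : Type*} (G : SimpleGraph V) (s : Finset V) : Prop :=
  ∀ u ∈ s, ∀ v ∈ s, ¬ G.Adj u v

/-- The finset of all independent sets of `G`. -/
noncomputable def indepFinsets {V : Type*} [Fintype V] (G : SimpleGraph V) :
    Finset (Finset V) :=
  @Finset.filter _ (fun s => IsIndepSet G s) (Classical.decPred _) Finset.univ

/-- `sCount G i` is the number of independent sets of size `i` in `G`. -/
noncomputable def sCount {V : Type*} [Fintype V] (G : SimpleGraph V) (i : ℕ) : ℕ :=
  ((indepFinsets G).filter (fun s => s.card = i)).card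

/-- The independence number `α(G)`: the maximum size of an independent set. -/
noncomputable def indepNum {V : Type*} [Fintype V] (G : SimpleGraph V) : ℕ :=
  (indepFinsets G).sup Finset.card

/-- The independence polynomial `I(G,t) = Σ_i s_i(G) t^i ∈ ℤ[t]`. -/
noncomputable def indepPoly {V : Type*} [Fintype V] (G : SimpleGraph V) : Polynomial ℤ :=
  ∑ i ∈ Finset.range (indepNum G + 1), Polynomial.C (sCount G i : ℤ) * Polynomial.X ^ i

/-- The h-polynomial of the edge ideal of `G`:
`h_G(t) = Σ_i s_i(G) t^i (1-t)^{α(G)-i} ∈ ℤ[t]`. -/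
noncomputable def hPoly {V : Type*} [Fintype V] (G : SimpleGraph V) : Polynomial ℤ :=
  ∑ i ∈ Finset.range (indepNum G + 1),
    Polynomial.C (sCount G i : ℤ) * Polynomial.X ^ i *
      (1 - Polynomial.X) ^ (indepNum G - i)

/-- The degree of a vertex in a finite simple graph. -/
noncomputable def deg {V : Type*} [Fintype V] (G : SimpleGraph V) (v : V) : ℕ :=
  (@Finset.filter _ (fun u => G.Adj v u) (Classical.decPred _) Finset.univ).card

-- Step 1
lemma indepPoly_eq_sum {V : Type*} [Fintype V] (G : SimpleGraph V) :
    indepPoly G = ∑ S ∈ indepFinsets G, (X : Polynomial ℤ) ^ S.card := by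
  classical
  have hmap : ∀ S ∈ indepFinsets G, S.card ∈ Finset.range (indepNum G + 1) := by
    intro S hS
    simp only [Finset.mem_range, Nat.lt_succ_iff]
    exact Finset.le_sup hS
  rw [← Finset.sum_fiberwise_of_maps_to (g := Finset.card) hmap
    (fun S => (X : Polynomial ℤ) ^ S.card)]
  unfold indepPoly
  refine Finset.sum_congr rfl fun i _ => ?_
  have h1 : ∀ S ∈ (indepFinsets G).filter (fun s => s.card = i),
      (X : Polynomial ℤ) ^ S.card = X ^ i := by
    intro S hS
    rw [(Finset.mem_filter.mp hS).2]
  rw [Finset.sum_congr rfl h1, Finset.sum_const, sCount]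
  simp [nsmul_eq_mul]

def natIndep (m : ℕ) : Finset (Finset ℕ) :=
  (Finset.range m).powerset.filter (fun s => ∀ a ∈ s, a + 1 ∉ s)

noncomputable def pathSum (m : ℕ) : Polynomial ℤ := ∑ s ∈ natIndep m, (X : Polynomial ℤ) ^ s.card

lemma mem_natIndep {m : ℕ} {s : Finset ℕ} :
    s ∈ natIndep m ↔ (∀ a ∈ s, a < m) ∧ ∀ a ∈ s, a + 1 ∉ s := by
  simp [natIndep, Finset.subset_iff]

lemma indepPoly_path (m : ℕ) :
    indepPoly (SimpleGraph.pathGraph m) = pathSum m := by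
  classical
  rw [indepPoly_eq_sum, pathSum]
  refine Finset.sum_bij (fun S _ => S.map Fin.valEmbedding) ?_ ?_ ?_ ?_
  · intro S hS
    rw [mem_natIndep]
    constructor
    · intro a ha
      simp only [Finset.mem_map, Fin.valEmbedding_apply] at ha
      obtain ⟨u, _, rfl⟩ := ha
      exact u.isLt
    · intro a ha hb
      simp only [Finset.mem_map, Fin.valEmbedding_apply] at ha hb
      obtain ⟨u, hu, rfl⟩ := ha
      obtain ⟨v, hv, hv2⟩ := hb
      have hind : IsIndepSet (SimpleGraph.pathGraph m) S :=
        (Finset.mem_filter.mp hS).2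
      exact hind u hu v hv (SimpleGraph.pathGraph_adj.mpr (Or.inl hv2.symm))
  · intro S1 h1 S2 h2 he
    exact Finset.map_injective _ he
  · intro s hs
    rw [mem_natIndep] at hs
    refine ⟨s.attachFin hs.1, ?_, ?_⟩
    · rw [indepFinsets, Finset.mem_filter]
      refine ⟨Finset.mem_univ _, ?_⟩
      intro u hu v hv hadj
      rw [Finset.mem_attachFin] at hu hv
      rcases SimpleGraph.pathGraph_adj.mp hadj with h | h
      · exact hs.2 u.val hu (h ▸ hv)
      · exact hs.2 v.val hv (h ▸ hu)
    · ext a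
      simp only [Finset.mem_map, Fin.valEmbedding_apply, Finset.mem_attachFin]
      constructor
      · rintro ⟨u, hu, rfl⟩; exact hu
      · intro ha; exact ⟨⟨a, hs.1 a ha⟩, ha, rfl⟩
  · intro S hS
    rw [Finset.card_map]

lemma pathSum_zero : pathSum 0 = 1 := by
  have h : natIndep 0 = {∅} := by
    ext s
    simp only [mem_natIndep, Finset.mem_singleton, Finset.eq_empty_iff_forall_notMem]
    constructor
    · rintro ⟨h1, _⟩ a ha
      exact absurd (h1 a ha) (Nat.not_lt_zero a)
    · intro h
      exact ⟨fun a ha => absurd ha (h a), fun a ha => absurd ha (h a)⟩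
  rw [pathSum, h]
  simp

lemma pathSum_one : pathSum 1 = 1 + X := by
  have h : natIndep 1 = {∅, {0}} := by
    ext s
    rw [mem_natIndep]
    constructor
    · intro ⟨h1, _⟩
      simp only [Finset.mem_insert, Finset.mem_singleton]
      rcases Finset.eq_empty_or_nonempty s with rfl | ⟨a, ha⟩
      · exact Or.inl rfl
      · right
        have := h1 a ha
        interval_cases a
        ext b
        simp only [Finset.mem_singleton]
        constructor
        · intro hb; have := h1 b hb; omega
        · rintro rfl; exact ha
    · intro hs
      simp only [Finset.mem_insert, Finset.mem_singleton] at hs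
      rcases hs with rfl | rfl <;> simp
  rw [pathSum, h, Finset.sum_pair (by intro h; exact absurd (h ▸ Finset.mem_singleton_self 0) (Finset.notMem_empty 0))]
  simp

lemma pathSum_rec (n : ℕ) :
    pathSum (n + 2) = pathSum (n + 1) + X * pathSum n := by
  classical
  rw [pathSum, ← Finset.sum_filter_add_sum_filter_not (natIndep (n + 2))
    (fun s => (n + 1) ∉ s)]
  congr 1
  · -- sets not containing n+1
    have h : (natIndep (n + 2)).filter (fun s => (n + 1) ∉ s) = natIndep (n + 1) := by
      ext s
      simp only [Finset.mem_filter, mem_natIndep]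
      constructor
      · rintro ⟨⟨h1, h2⟩, h3⟩
        refine ⟨fun a ha => ?_, h2⟩
        have := h1 a ha
        rcases Nat.lt_or_ge a (n+1) with h | h
        · exact h
        · exfalso; have : a = n + 1 := by omega
          exact h3 (this ▸ ha)
      · rintro ⟨h1, h2⟩
        exact ⟨⟨fun a ha => Nat.lt_succ_of_lt (h1 a ha), h2⟩,
          fun hmem => absurd (h1 _ hmem) (by omega)⟩
    rw [h, pathSum]
  · -- sets containing n+1
    rw [pathSum, Finset.mul_sum]
    refine Finset.sum_nbij' (fun s => s.erase (n + 1)) (fun t => insert (n + 1) t)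
      ?_ ?_ ?_ ?_ ?_
    · intro s hs
      simp only [Finset.mem_filter, mem_natIndep, not_not] at hs
      obtain ⟨⟨h1, h2⟩, h3⟩ := hs
      rw [mem_natIndep]
      have hn : n ∉ s := fun hn => h2 n hn h3
      constructor
      · intro a ha
        rw [Finset.mem_erase] at ha
        have := h1 a ha.2
        have : a ≠ n := fun h => hn (h ▸ ha.2)
        omega
      · intro a ha hb
        rw [Finset.mem_erase] at ha hb
        exact h2 a ha.2 hb.2
    · intro t ht
      rw [mem_natIndep] at ht
      obtain ⟨h1, h2⟩ := ht
      simp only [Finset.mem_filter, mem_natIndep, not_not]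
      refine ⟨⟨?_, ?_⟩, Finset.mem_insert_self _ _⟩
      · intro a ha
        rcases Finset.mem_insert.mp ha with rfl | ha
        · omega
        · exact Nat.lt_of_lt_of_le (h1 a ha) (by omega)
      · intro a ha hb
        rcases Finset.mem_insert.mp ha with rfl | ha
        · rcases Finset.mem_insert.mp hb with h | h
          · omega
          · have := h1 _ h; omega
        · rcases Finset.mem_insert.mp hb with h | h
          · have := h1 a ha; omega
          · exact h2 a ha h
    · intro s hs
      simp only [Finset.mem_filter, not_not] at hs
      exact Finset.insert_erase hs.2
    · intro t ht
      rw [mem_natIndep] at ht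
      exact Finset.erase_insert (fun h => absurd (ht.1 _ h) (by omega))
    · intro s hs
      simp only [Finset.mem_filter, not_not] at hs
      rw [Finset.card_erase_of_mem hs.2, ← pow_succ']
      congr 1
      have : 1 ≤ s.card := Finset.card_pos.mpr ⟨n + 1, hs.2⟩
      omega

lemma f_rec (n : ℕ) : (pathSum (n+2)).eval (-1) =
    (pathSum (n+1)).eval (-1) - (pathSum n).eval (-1) := by
  rw [pathSum_rec]; simp; ring

lemma g_rec (n : ℕ) : (derivative (pathSum (n+2))).eval (-1) =
    (derivative (pathSum (n+1))).eval (-1) + (pathSum n).eval (-1)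
      - (derivative (pathSum n)).eval (-1) := by
  rw [pathSum_rec]
  simp [derivative_mul]
  ring

lemma key (q : ℕ) :
    (pathSum (6*q)).eval (-1) = 1 ∧ (pathSum (6*q+1)).eval (-1) = 0 ∧
    (pathSum (6*q+2)).eval (-1) = -1 ∧ (pathSum (6*q+3)).eval (-1) = -1 ∧
    (pathSum (6*q+4)).eval (-1) = 0 ∧ (pathSum (6*q+5)).eval (-1) = 1 ∧
    (derivative (pathSum (6*q))).eval (-1) = -2*(q:ℤ) ∧
    (derivative (pathSum (6*q+1))).eval (-1) = 2*(q:ℤ)+1 ∧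
    (derivative (pathSum (6*q+2))).eval (-1) = 4*(q:ℤ)+2 ∧
    (derivative (pathSum (6*q+3))).eval (-1) = 2*(q:ℤ)+1 ∧
    (derivative (pathSum (6*q+4))).eval (-1) = -2*(q:ℤ)-2 ∧
    (derivative (pathSum (6*q+5))).eval (-1) = -4*(q:ℤ)-4 := by
  induction q with
  | zero =>
    have f0 : (pathSum 0).eval (-1) = 1 := by rw [pathSum_zero]; simp
    have f1 : (pathSum 1).eval (-1) = 0 := by rw [pathSum_one]; simp
    have g0 : (derivative (pathSum 0)).eval (-1) = 0 := by rw [pathSum_zero]; simp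
    have g1 : (derivative (pathSum 1)).eval (-1) = 1 := by rw [pathSum_one]; simp
    have f2 : (pathSum 2).eval (-1) = -1 := by
      have h := f_rec 0; norm_num [f0, f1] at h; exact h
    have f3 : (pathSum 3).eval (-1) = -1 := by
      have h := f_rec 1; norm_num [f1, f2] at h; exact h
    have f4 : (pathSum 4).eval (-1) = 0 := by
      have h := f_rec 2; norm_num [f2, f3] at h; linarith
    have f5 : (pathSum 5).eval (-1) = 1 := by
      have h := f_rec 3; norm_num [f3, f4] at h; linarith
    have g2 : (derivative (pathSum 2)).eval (-1) = 2 := by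
      have h := g_rec 0; norm_num [g0, g1, f0] at h; exact h
    have g3 : (derivative (pathSum 3)).eval (-1) = 1 := by
      have h := g_rec 1; norm_num [g1, g2, f1] at h; linarith
    have g4 : (derivative (pathSum 4)).eval (-1) = -2 := by
      have h := g_rec 2; norm_num [g2, g3, f2] at h; linarith
    have g5 : (derivative (pathSum 5)).eval (-1) = -4 := by
      have h := g_rec 3; norm_num [g3, g4, f3] at h; linarith
    norm_num [f0, f1, f2, f3, f4, f5, g0, g1, g2, g3, g4, g5]
  | succ q ih =>
    obtain ⟨hf0, hf1, hf2, hf3, hf4, hf5, hg0, hg1, hg2, hg3, hg4, hg5⟩ := ih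
    have F6 : (pathSum (6*q+6)).eval (-1) = 1 := by
      have h := f_rec (6*q+4)
      rw [show 6*q+4+2 = 6*q+6 from by ring, show 6*q+4+1 = 6*q+5 from by ring,
        hf5, hf4] at h
      linarith
    have F7 : (pathSum (6*q+7)).eval (-1) = 0 := by
      have h := f_rec (6*q+5)
      rw [show 6*q+5+2 = 6*q+7 from by ring, show 6*q+5+1 = 6*q+6 from by ring,
        F6, hf5] at h
      linarith
    have F8 : (pathSum (6*q+8)).eval (-1) = -1 := by
      have h := f_rec (6*q+6)
      rw [show 6*q+6+2 = 6*q+8 from by ring, show 6*q+6+1 = 6*q+7 from by ring,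
        F7, F6] at h
      linarith
    have F9 : (pathSum (6*q+9)).eval (-1) = -1 := by
      have h := f_rec (6*q+7)
      rw [show 6*q+7+2 = 6*q+9 from by ring, show 6*q+7+1 = 6*q+8 from by ring,
        F8, F7] at h
      linarith
    have F10 : (pathSum (6*q+10)).eval (-1) = 0 := by
      have h := f_rec (6*q+8)
      rw [show 6*q+8+2 = 6*q+10 from by ring, show 6*q+8+1 = 6*q+9 from by ring,
        F9, F8] at h
      linarith
    have F11 : (pathSum (6*q+11)).eval (-1) = 1 := by
      have h := f_rec (6*q+9)
      rw [show 6*q+9+2 = 6*q+11 from by ring, show 6*q+9+1 = 6*q+10 from by ring,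
        F10, F9] at h
      linarith
    have G6 : (derivative (pathSum (6*q+6))).eval (-1) = -2*(q:ℤ)-2 := by
      have h := g_rec (6*q+4)
      rw [show 6*q+4+2 = 6*q+6 from by ring, show 6*q+4+1 = 6*q+5 from by ring,
        hg5, hf4, hg4] at h
      linarith
    have G7 : (derivative (pathSum (6*q+7))).eval (-1) = 2*(q:ℤ)+3 := by
      have h := g_rec (6*q+5)
      rw [show 6*q+5+2 = 6*q+7 from by ring, show 6*q+5+1 = 6*q+6 from by ring,
        G6, hf5, hg5] at h
      linarith
    have G8 : (derivative (pathSum (6*q+8))).eval (-1) = 4*(q:ℤ)+6 := by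
      have h := g_rec (6*q+6)
      rw [show 6*q+6+2 = 6*q+8 from by ring, show 6*q+6+1 = 6*q+7 from by ring,
        G7, F6, G6] at h
      linarith
    have G9 : (derivative (pathSum (6*q+9))).eval (-1) = 2*(q:ℤ)+3 := by
      have h := g_rec (6*q+7)
      rw [show 6*q+7+2 = 6*q+9 from by ring, show 6*q+7+1 = 6*q+8 from by ring,
        G8, F7, G7] at h
      linarith
    have G10 : (derivative (pathSum (6*q+10))).eval (-1) = -2*(q:ℤ)-4 := by
      have h := g_rec (6*q+8)
      rw [show 6*q+8+2 = 6*q+10 from by ring, show 6*q+8+1 = 6*q+9 from by ring,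
        G9, F8, G8] at h
      linarith
    have G11 : (derivative (pathSum (6*q+11))).eval (-1) = -4*(q:ℤ)-8 := by
      have h := g_rec (6*q+9)
      rw [show 6*q+9+2 = 6*q+11 from by ring, show 6*q+9+1 = 6*q+10 from by ring,
        G10, F9, G9] at h
      linarith
    refine ⟨?_, ?_, ?_, ?_, ?_, ?_, ?_, ?_, ?_, ?_, ?_, ?_⟩
    · rw [show 6*(q+1) = 6*q+6 from by ring]; exact F6
    · rw [show 6*(q+1)+1 = 6*q+7 from by ring]; exact F7
    · rw [show 6*(q+1)+2 = 6*q+8 from by ring]; exact F8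
    · rw [show 6*(q+1)+3 = 6*q+9 from by ring]; exact F9
    · rw [show 6*(q+1)+4 = 6*q+10 from by ring]; exact F10
    · rw [show 6*(q+1)+5 = 6*q+11 from by ring]; exact F11
    · rw [show 6*(q+1) = 6*q+6 from by ring, G6]; push_cast; ring
    · rw [show 6*(q+1)+1 = 6*q+7 from by ring, G7]; push_cast; ring
    · rw [show 6*(q+1)+2 = 6*q+8 from by ring, G8]; push_cast; ring
    · rw [show 6*(q+1)+3 = 6*q+9 from by ring, G9]; push_cast; ring
    · rw [show 6*(q+1)+4 = 6*q+10 from by ring, G10]; push_cast; ring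
    · rw [show 6*(q+1)+5 = 6*q+11 from by ring, G11]; push_cast; ring


/-- Values of the independence polynomial of the path `P_n` (and of its
derivative) at `-1`:  `I(P_n,-1) = (-1)^n` if `n ≡ 0 (mod 3)`, `I(P_n,-1) = (-1)^{n-1}` if
`n ≡ 2 (mod 3)`, and if `n ≡ 1 (mod 3)` then `I(P_n,-1) = 0` and
`I'(P_n,-1) = ((n+2)/3)·(-1)^{n-1}`. -/
theorem eval_indepPoly_pathGraph (n : ℕ) (hn : 1 ≤ n) :
    (n % 3 = 0 → (indepPoly (SimpleGraph.pathGraph n)).eval (-1) = (-1) ^ n) ∧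
    (n % 3 = 2 → (indepPoly (SimpleGraph.pathGraph n)).eval (-1) = (-1) ^ (n - 1)) ∧
    (n % 3 = 1 → (indepPoly (SimpleGraph.pathGraph n)).eval (-1) = 0 ∧
      (Polynomial.derivative (indepPoly (SimpleGraph.pathGraph n))).eval (-1) =
        (((n + 2) / 3 : ℕ) : ℤ) * (-1) ^ (n - 1)) := by
  obtain ⟨q, r, hr, rfl⟩ : ∃ q r, r < 6 ∧ n = 6*q+r :=
    ⟨n/6, n%6, Nat.mod_lt _ (by norm_num), (Nat.div_add_mod n 6).symm⟩
  obtain ⟨hf0, hf1, hf2, hf3, hf4, hf5, hg0, hg1, hg2, hg3, hg4, hg5⟩ := key q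
  simp only [indepPoly_path]
  interval_cases r
  · -- r = 0, n = 6q, n % 3 = 0
    refine ⟨fun _ => ?_, fun h => absurd h (by omega), fun h => absurd h (by omega)⟩
    rw [show 6*q+0 = 6*q from by ring, hf0, Even.neg_one_pow ⟨3*q, by ring⟩]
  · -- r = 1, n % 3 = 1
    refine ⟨fun h => absurd h (by omega), fun h => absurd h (by omega), fun _ => ⟨hf1, ?_⟩⟩
    rw [hg1, show (6*q+1+2)/3 = 2*q+1 from by omega, show 6*q+1-1 = 6*q from by omega,
      Even.neg_one_pow ⟨3*q, by ring⟩]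
    push_cast; ring
  · -- r = 2, n % 3 = 2
    refine ⟨fun h => absurd h (by omega), fun _ => ?_, fun h => absurd h (by omega)⟩
    rw [hf2, show 6*q+2-1 = 6*q+1 from by omega, Odd.neg_one_pow ⟨3*q, by ring⟩]
  · -- r = 3, n % 3 = 0
    refine ⟨fun _ => ?_, fun h => absurd h (by omega), fun h => absurd h (by omega)⟩
    rw [hf3, Odd.neg_one_pow ⟨3*q+1, by ring⟩]
  · -- r = 4, n % 3 = 1
    refine ⟨fun h => absurd h (by omega), fun h => absurd h (by omega), fun _ => ⟨hf4, ?_⟩⟩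
    rw [hg4, show (6*q+4+2)/3 = 2*q+2 from by omega, show 6*q+4-1 = 6*q+3 from by omega,
      Odd.neg_one_pow ⟨3*q+1, by ring⟩]
    push_cast; ring
  · -- r = 5, n % 3 = 2
    refine ⟨fun h => absurd h (by omega), fun _ => ?_, fun h => absurd h (by omega)⟩
    rw [hf5, show 6*q+5-1 = 6*q+4 from by omega, Even.neg_one_pow ⟨3*q+2, by ring⟩]
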